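/- Let R be a commutative ring and t ≥ 1 an integer. Let (Λ, ≤) be a directed preorder and (B_λ)_{λ∈Λ} a directed system of graded R-algebras (each with grading ℬ_λ and degree-zero component equal to the image of R), with transition maps u_{λμ} : B_λ → B_μ for λ ≤ μ that are R-algebra homomorphisms satisfying u_{λμ}(ℬ_λ n) ⊆ ℬ_μ n for all n. Let B be a graded R-algebra with grading ℬ together with R-algebra homomorphisms v_λ : B_λ → B satisfying v_μ ∘ u_{λμ} = v_λ and v_λ(ℬ_λ n) ⊆ ℬ n, and exhibiting B as the direct limit of the system, i.e.: every element of B lies in the image of some v_λ; whenever v_λ(b) = 0 there exists μ ≥ λ with u_{λμ}(b) = 0; and for each n, ℬ n is the union of the images v_λ(ℬ_λ n). If every B_λ is a t-pgg R-algebra, then B is a t-pgg R-algebra. -/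
import Mathlib


/-!
Partially generated graded algebras (pgg).

A graded `R`-algebra `A` (grading `𝒜 : ℕ → Submodule R A`) is `t`-pgg if the evaluation
map from the (weighted) polynomial ring on variables `X_(i,a)` (`1 ≤ i ≤ t`, `a ∈ 𝒜 i`,
`X_(i,a)` of weight `i`) sending `X_(i,a) ↦ a` is surjective and its kernel is generated
by weighted-homogeneous polynomials of weighted degree at most `t`.
-/

open MvPolynomial

/-- The variables `X_(i,a)` for `1 ≤ i ≤ t` and `a ∈ 𝒜 i`. -/
abbrev PggVars {R A : Type*} [CommRing R] [CommRing A] [Algebra R A]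
    (𝒜 : ℕ → Submodule R A) (t : ℕ) : Type _ :=
  Σ i : Set.Icc 1 t, 𝒜 (i : ℕ)

/-- The weight of the variable `X_(i,a)` is `i`. -/
def pggWeight {R A : Type*} [CommRing R] [CommRing A] [Algebra R A]
    (𝒜 : ℕ → Submodule R A) (t : ℕ) : PggVars 𝒜 t → ℕ :=
  fun v => (v.1 : ℕ)

/-- The evaluation homomorphism `ev_t`, sending `X_(i,a)` to `a`. -/
noncomputable def pggEval {R A : Type*} [CommRing R] [CommRing A] [Algebra R A]
    (𝒜 : ℕ → Submodule R A) (t : ℕ) :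
    MvPolynomial (PggVars 𝒜 t) R →ₐ[R] A :=
  aeval fun v => (v.2 : A)

/-- `A` is a `t`-partially generated graded (`t`-pgg) `R`-algebra: `ev_t` is surjective and
its kernel is generated by weighted-homogeneous polynomials of weighted degree at most `t`. -/
def IsPgg {R A : Type*} [CommRing R] [CommRing A] [Algebra R A]
    (𝒜 : ℕ → Submodule R A) (t : ℕ) : Prop :=
  Function.Surjective (pggEval 𝒜 t) ∧
  ∃ S : Set (MvPolynomial (PggVars 𝒜 t) R),
    (∀ p ∈ S, ∃ n ≤ t, p.IsWeightedHomogeneous (pggWeight 𝒜 t) n) ∧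
    RingHom.ker (pggEval 𝒜 t) = Ideal.span S



section Aux

open MvPolynomial Finsupp

lemma weight_mapDomain' {σ τ M : Type*} [AddCommMonoid M] (f : σ → τ) (w : τ → M) (d : σ →₀ ℕ) :
    Finsupp.weight w (Finsupp.mapDomain f d) = Finsupp.weight (w ∘ f) d := by
  classical
  rw [Finsupp.weight_apply, Finsupp.weight_apply,
    Finsupp.sum_mapDomain_index (fun b => by simp) (fun b m n => by rw [add_smul])]
  rfl

lemma MvPolynomial.IsWeightedHomogeneous.rename_of_comp' {σ τ R M : Type*} [CommSemiring R] [AddCommMonoid M]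
    {w : σ → M} {w' : τ → M} (f : σ → τ) (hw : ∀ i, w' (f i) = w i)
    {p : MvPolynomial σ R} {n : M} (hp : p.IsWeightedHomogeneous w n) :
    (rename f p).IsWeightedHomogeneous w' n := by
  rw [← mem_weightedHomogeneousSubmodule] at hp ⊢
  have hre : rename f p = ∑ d ∈ p.support, monomial (Finsupp.mapDomain f d) (coeff d p) := by
    conv_lhs => rw [p.as_sum]
    rw [map_sum]
    simp_rw [rename_monomial]
  rw [hre]
  apply Submodule.sum_mem
  intro d hd
  rw [mem_weightedHomogeneousSubmodule]
  apply isWeightedHomogeneous_monomial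
  rw [weight_mapDomain']
  have hwf : w' ∘ f = w := _root_.funext hw
  rw [hwf]
  exact hp (mem_support_iff.mp hd)

lemma rename_eq_self_of_eqOn' {σ R : Type*} [CommSemiring R] {f : σ → σ} {p : MvPolynomial σ R}
    (h : ∀ i ∈ p.vars, f i = i) : rename f p = p := by
  have : (rename (R := R) f).toRingHom p = RingHom.id (MvPolynomial σ R) p := by
    refine hom_congr_vars ?_ ?_ rfl
    · ext r
      simp [algebraMap_eq]
    · intro i hi _
      simp [h i hi]
  simpa using this

/-- The map on pgg variables induced by a grading-preserving algebra map. -/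
def pggVarMap {R A A' : Type*} [CommRing R] [CommRing A] [CommRing A'] [Algebra R A]
    [Algebra R A'] (𝒜 : ℕ → Submodule R A) (𝒜' : ℕ → Submodule R A') (t : ℕ)
    (f : A →ₐ[R] A') (hf : ∀ n, ∀ x ∈ 𝒜 n, f x ∈ 𝒜' n) :
    PggVars 𝒜 t → PggVars 𝒜' t :=
  fun w => ⟨w.1, ⟨f w.2, hf _ _ w.2.2⟩⟩

lemma pggEval_rename' {R A A' : Type*} [CommRing R] [CommRing A] [CommRing A'] [Algebra R A]
    [Algebra R A'] (𝒜 : ℕ → Submodule R A) (𝒜' : ℕ → Submodule R A') (t : ℕ)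
    (f : A →ₐ[R] A') (hf : ∀ n, ∀ x ∈ 𝒜 n, f x ∈ 𝒜' n)
    (p : MvPolynomial (PggVars 𝒜 t) R) :
    pggEval 𝒜' t (rename (pggVarMap 𝒜 𝒜' t f hf) p) = f (pggEval 𝒜 t p) := by
  rw [pggEval, pggEval, aeval_rename, comp_aeval_apply]
  rfl

lemma pggVarMap_comp' {R A A' A'' : Type*} [CommRing R] [CommRing A] [CommRing A'] [CommRing A'']
    [Algebra R A] [Algebra R A'] [Algebra R A'']
    (𝒜 : ℕ → Submodule R A) (𝒜' : ℕ → Submodule R A') (𝒜'' : ℕ → Submodule R A'') (t : ℕ)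
    (f : A →ₐ[R] A') (hf : ∀ n, ∀ x ∈ 𝒜 n, f x ∈ 𝒜' n)
    (g : A' →ₐ[R] A'') (hg : ∀ n, ∀ x ∈ 𝒜' n, g x ∈ 𝒜'' n)
    (h : A →ₐ[R] A'') (hh : ∀ n, ∀ x ∈ 𝒜 n, h x ∈ 𝒜'' n)
    (hgf : ∀ x : A, g (f x) = h x) (w : PggVars 𝒜 t) :
    pggVarMap 𝒜' 𝒜'' t g hg (pggVarMap 𝒜 𝒜' t f hf w) = pggVarMap 𝒜 𝒜'' t h hh w := by
  exact congrArg (Sigma.mk w.1) (Subtype.ext (hgf (w.2 : A)))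

end Aux

set_option maxHeartbeats 1000000 in
/-- **Proposition 5.15**: a direct limit of `t`-pgg graded `R`-algebras is `t`-pgg. -/
theorem stmt10 {R : Type*} [CommRing R] (t : ℕ) (ht : 1 ≤ t)
    {Λ : Type*} [Preorder Λ] [IsDirected Λ (· ≤ ·)]
    -- the directed system of graded `R`-algebras
    (B : Λ → Type*) [∀ l, CommRing (B l)] [∀ l, Algebra R (B l)]
    (ℬl : ∀ l, ℕ → Submodule R (B l)) [∀ l, GradedAlgebra (ℬl l)]
    (h0l : ∀ l, ℬl l 0 = LinearMap.range (Algebra.linearMap R (B l)))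
    (u : ∀ {l m : Λ}, l ≤ m → (B l →ₐ[R] B m))
    (hu_comp : ∀ {l m p : Λ} (h1 : l ≤ m) (h2 : m ≤ p), (u h2).comp (u h1) = u (h1.trans h2))
    (hu_graded : ∀ {l m : Λ} (h : l ≤ m) (n : ℕ), ∀ x ∈ ℬl l n, u h x ∈ ℬl m n)
    -- the limit graded `R`-algebra
    (C : Type*) [CommRing C] [Algebra R C]
    (𝒞 : ℕ → Submodule R C) [GradedAlgebra 𝒞]
    (h0C : 𝒞 0 = LinearMap.range (Algebra.linearMap R C))
    (v : ∀ l : Λ, B l →ₐ[R] C)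
    (hv_comp : ∀ {l m : Λ} (h : l ≤ m), (v m).comp (u h) = v l)
    (hv_graded : ∀ (l : Λ) (n : ℕ), ∀ x ∈ ℬl l n, v l x ∈ 𝒞 n)
    -- `C` is the direct limit of the system
    (hsurj : ∀ c : C, ∃ (l : Λ) (x : B l), v l x = c)
    (hker : ∀ (l : Λ) (x : B l), v l x = 0 → ∃ (m : Λ) (h : l ≤ m), u h x = 0)
    (hgr_union : ∀ (n : ℕ), ∀ c ∈ 𝒞 n, ∃ (l : Λ) (x : B l), x ∈ ℬl l n ∧ v l x = c)
    -- each stage is `t`-pgg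
    (hpgg : ∀ l : Λ, IsPgg (ℬl l) t) :
    IsPgg 𝒞 t := by
  classical
  have hΛ : Nonempty Λ := ⟨(hsurj 0).choose⟩
  -- the induced variable maps
  set g : ∀ l : Λ, PggVars (ℬl l) t → PggVars 𝒞 t :=
    fun l => pggVarMap (ℬl l) 𝒞 t (v l) (fun n x hx => hv_graded l n x hx) with hg
  have key : ∀ (l : Λ) (p : MvPolynomial (PggVars (ℬl l) t) R),
      pggEval 𝒞 t (rename (g l) p) = v l (pggEval (ℬl l) t p) :=
    fun l p => pggEval_rename' (ℬl l) 𝒞 t (v l) _ p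
  constructor
  · -- surjectivity
    intro c
    obtain ⟨l, x, hx⟩ := hsurj c
    obtain ⟨p, hp⟩ := (hpgg l).1 x
    exact ⟨rename (g l) p, by rw [key l p, hp, hx]⟩
  · -- kernel
    choose S hS hkerS using fun l => (hpgg l).2
    refine ⟨⋃ l : Λ, (fun p => rename (g l) p) '' S l, ?_, ?_⟩
    · rintro p hp
      simp only [Set.mem_iUnion, Set.mem_image] at hp
      obtain ⟨l, q, hq, rfl⟩ := hp
      obtain ⟨n, hn, hhom⟩ := hS l q hq
      exact ⟨n, hn, hhom.rename_of_comp' (g l) (fun i => rfl)⟩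
    · apply le_antisymm
      · -- ker ⊆ span
        intro q hq
        rw [RingHom.mem_ker] at hq
        -- lift the variables of q to a common stage l
        choose L x hxmem hxval using fun w : PggVars 𝒞 t => hgr_union w.1 w.2 w.2.2
        obtain ⟨l, hl⟩ := (q.vars.image L).exists_le
        have hle : ∀ w ∈ q.vars, L w ≤ l := fun w hw => hl _ (Finset.mem_image_of_mem L hw)
        set s : PggVars 𝒞 t → PggVars (ℬl l) t := fun w =>
          if h : w ∈ q.vars then
            ⟨w.1, ⟨u (hle w h) (x w), hu_graded (hle w h) w.1 (x w) (hxmem w)⟩⟩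
          else ⟨⟨1, Set.mem_Icc.mpr ⟨le_refl 1, ht⟩⟩, 0⟩ with hs
        have hgs : ∀ w ∈ q.vars, g l (s w) = w := by
          intro w hw
          have hval : v l (u (hle w hw) (x w)) = (w.2 : C) := by
            rw [← AlgHom.comp_apply, hv_comp (hle w hw), hxval w]
          obtain ⟨i, c⟩ := w
          simp only [hs, dif_pos hw, hg, pggVarMap]
          exact congrArg (Sigma.mk i) (Subtype.ext hval)
        set p := rename s q with hp
        have hqp : rename (g l) p = q := by
          rw [hp, rename_rename]
          exact rename_eq_self_of_eqOn' (fun w hw => hgs w hw)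
        have h0 : v l (pggEval (ℬl l) t p) = 0 := by rw [← key l p, hqp, hq]
        obtain ⟨m, hlm, hum⟩ := hker l _ h0
        set gu : PggVars (ℬl l) t → PggVars (ℬl m) t :=
          pggVarMap (ℬl l) (ℬl m) t (u hlm) (fun n x hx => hu_graded hlm n x hx) with hgu
        have hpm : pggEval (ℬl m) t (rename gu p) = 0 := by
          rw [hgu, pggEval_rename' (ℬl l) (ℬl m) t (u hlm) _ p, hum]
        have hmem : rename gu p ∈ Ideal.span (S m) := by
          rw [← hkerS m]
          exact RingHom.mem_ker.mpr hpm
        have hqm : rename (g m) (rename gu p) = q := by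
          rw [rename_rename]
          have hcomp : g m ∘ gu = g l := funext fun w =>
            pggVarMap_comp' (ℬl l) (ℬl m) 𝒞 t (u hlm) (fun n x hx => hu_graded hlm n x hx)
              (v m) (fun n x hx => hv_graded m n x hx) (v l) (fun n x hx => hv_graded l n x hx)
              (fun y => AlgHom.congr_fun (hv_comp hlm) y) w
          rw [hcomp, hqp]
        rw [← hqm]
        have hmap : rename (g m) (rename gu p) ∈
            Ideal.map (rename (g m) : MvPolynomial (PggVars (ℬl m) t) R →ₐ[R]
              MvPolynomial (PggVars 𝒞 t) R) (Ideal.span (S m)) :=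
          Ideal.mem_map_of_mem _ hmem
        rw [Ideal.map_span] at hmap
        refine Ideal.span_mono ?_ hmap
        exact Set.subset_iUnion (fun l => (fun p => rename (g l) p) '' S l) m
      · -- span ⊆ ker
        rw [Ideal.span_le]
        rintro p hp
        simp only [Set.mem_iUnion, Set.mem_image] at hp
        obtain ⟨l, q', hq', rfl⟩ := hp
        have hq0 : pggEval (ℬl l) t q' = 0 := by
          have : q' ∈ RingHom.ker (pggEval (ℬl l) t) := by
            rw [hkerS l]
            exact Ideal.subset_span hq'
          exact RingHom.mem_ker.mp this
        have : pggEval 𝒞 t (rename (g l) q') = 0 := by rw [key l q', hq0, map_zero]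
        exact RingHom.mem_ker.mpr this
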